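/- Define the planar polynomial vector fields X = (X₁, X₂) and Y = (Y₁, Y₂) by X₁(x,y) = −y, X₂(x,y) = x(1 + y)³, Y₁(x,y) = x + xy, Y₂(x,y) = −x²y³ + y² − 3x²y² + y − 3x²y − x². Then the Lie bracket [X, Y] vanishes identically: for all (x,y) ∈ ℝ², X₁·∂Y₁/∂x + X₂·∂Y₁/∂y − Y₁·∂X₁/∂x − Y₂·∂X₁/∂y = 0 and X₁·∂Y₂/∂x + X₂·∂Y₂/∂y − Y₁·∂X₂/∂x − Y₂·∂X₂/∂y = 0. -/

import Mathlib

/-- The vector fields `X = (−y, x(1+y)³)` and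
`Y = (x + xy, −x²y³ + y² − 3x²y² + y − 3x²y − x²)` commute: their Lie bracket
`[X,Y]`, with components `(X·∇)Yᵢ − (Y·∇)Xᵢ`, vanishes identically. -/
theorem stmt_18 (x y : ℝ) :
    ((-y) * deriv (fun t : ℝ => t + t * y) x
      + (x * (1 + y) ^ 3) * deriv (fun t : ℝ => x + x * t) y
      - (x + x * y) * deriv (fun t : ℝ => -y) x
      - (-x ^ 2 * y ^ 3 + y ^ 2 - 3 * x ^ 2 * y ^ 2 + y - 3 * x ^ 2 * y - x ^ 2) *
          deriv (fun t : ℝ => -t) y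
      = 0)
    ∧ ((-y) * deriv (fun t : ℝ =>
          -t ^ 2 * y ^ 3 + y ^ 2 - 3 * t ^ 2 * y ^ 2 + y - 3 * t ^ 2 * y - t ^ 2) x
      + (x * (1 + y) ^ 3) * deriv (fun t : ℝ =>
          -x ^ 2 * t ^ 3 + t ^ 2 - 3 * x ^ 2 * t ^ 2 + t - 3 * x ^ 2 * t - x ^ 2) y
      - (x + x * y) * deriv (fun t : ℝ => t * (1 + y) ^ 3) x
      - (-x ^ 2 * y ^ 3 + y ^ 2 - 3 * x ^ 2 * y ^ 2 + y - 3 * x ^ 2 * y - x ^ 2) *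
          deriv (fun t : ℝ => x * (1 + t) ^ 3) y
      = 0) := by
  have h1 : deriv (fun t : ℝ => t + t * y) x = 1 + y := by
    have := ((hasDerivAt_id x).add ((hasDerivAt_id x).mul_const y)).deriv
    simpa using this
  have h2 : deriv (fun t : ℝ => x + x * t) y = x := by
    have := ((hasDerivAt_const y x).add ((hasDerivAt_id y).const_mul x)).deriv
    simpa using this
  have h3 : deriv (fun t : ℝ => -y) x = (0 : ℝ) := deriv_const x (-y)
  have h4 : deriv (fun t : ℝ => -t) y = (-1 : ℝ) := by
    simpa using (hasDerivAt_id y).neg.deriv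
  have h5 : deriv (fun t : ℝ =>
      -t ^ 2 * y ^ 3 + y ^ 2 - 3 * t ^ 2 * y ^ 2 + y - 3 * t ^ 2 * y - t ^ 2) x
      = -2 * x * y ^ 3 - 6 * x * y ^ 2 - 6 * x * y - 2 * x := by
    have := (((((((hasDerivAt_pow 2 x).neg.mul_const (y ^ 3)).add
        (hasDerivAt_const x (y ^ 2))).sub
        (((hasDerivAt_pow 2 x).const_mul 3).mul_const (y ^ 2))).add
        (hasDerivAt_const x y)).sub
        (((hasDerivAt_pow 2 x).const_mul 3).mul_const y)).sub
        (hasDerivAt_pow 2 x)).deriv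
    refine this.trans ?_; ring
  have h6 : deriv (fun t : ℝ =>
      -x ^ 2 * t ^ 3 + t ^ 2 - 3 * x ^ 2 * t ^ 2 + t - 3 * x ^ 2 * t - x ^ 2) y
      = -3 * x ^ 2 * y ^ 2 + 2 * y - 6 * x ^ 2 * y + 1 - 3 * x ^ 2 := by
    have := ((((((hasDerivAt_pow 3 y).const_mul (-x ^ 2)).add
        (hasDerivAt_pow 2 y)).sub
        ((hasDerivAt_pow 2 y).const_mul (3 * x ^ 2))).add
        (hasDerivAt_id y)).sub
        ((hasDerivAt_id y).const_mul (3 * x ^ 2))).sub (hasDerivAt_const y (x ^ 2))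
    simp only [id_eq] at this
    refine this.deriv.trans ?_; push_cast; ring
  have h7 : deriv (fun t : ℝ => t * (1 + y) ^ 3) x = (1 + y) ^ 3 := by
    simpa using ((hasDerivAt_id x).mul_const ((1 + y) ^ 3)).deriv
  have h8 : deriv (fun t : ℝ => x * (1 + t) ^ 3) y = x * (3 * (1 + y) ^ 2) := by
    have := ((((hasDerivAt_const y (1:ℝ)).add (hasDerivAt_id y)).pow 3).const_mul x).deriv
    simpa using this
  rw [h1, h2, h3, h4, h5, h6, h7, h8]
  constructor <;> ring
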